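/- (Appendix A: propriety of the Bayesian sparse group lasso hyperprior) For every integer m ≥ 1 and reals λ₁, λ₂ > 0, the function h(t₁,…,t_m, γ) = [∏_{j=1}^m t_j^{−1/2}·(1/t_j + 1/γ)^{−1/2}] · γ^{−1/2} · exp(−(λ₁²/2)·Σ_{j=1}^m t_j − (λ₂²/2)·γ) is integrable over (0,∞)^m × (0,∞) with respect to Lebesgue measure; i.e., ∫_{(0,∞)^{m+1}} h < ∞, so the prior in equation (3.4) is proper. -/

import Mathlib

open MeasureTheory

/-- **Appendix A: propriety of the Bayesian sparse group lasso hyperprior.**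
For every `m ≥ 1` and `λ₁, λ₂ > 0`, the function
`h(t₁,…,t_m, γ) = [∏_j t_j^{-1/2} (1/t_j + 1/γ)^{-1/2}] γ^{-1/2}
  exp(-(λ₁²/2) ∑_j t_j - (λ₂²/2) γ)`
is integrable over `(0,∞)^m × (0,∞)` with respect to Lebesgue measure, so the
prior (3.4) is proper. -/
theorem bsgl_hyperprior_proper (m : ℕ) (hm : 1 ≤ m)
    (lam₁ lam₂ : ℝ) (hlam₁ : 0 < lam₁) (hlam₂ : 0 < lam₂) :
    IntegrableOn
      (fun q : (Fin m → ℝ) × ℝ =>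
        (∏ j : Fin m, (q.1 j) ^ (-(1 : ℝ) / 2) *
            ((q.1 j)⁻¹ + q.2⁻¹) ^ (-(1 : ℝ) / 2)) *
          q.2 ^ (-(1 : ℝ) / 2) *
          Real.exp (-(lam₁ ^ 2 / 2) * (∑ j, q.1 j) - lam₂ ^ 2 / 2 * q.2))
      ((Set.univ.pi fun _ : Fin m => Set.Ioi (0 : ℝ)) ×ˢ Set.Ioi (0 : ℝ))
      volume := by
  set a : ℝ := lam₁ ^ 2 / 2 with ha_def
  set b : ℝ := lam₂ ^ 2 / 2 with hb_def
  have ha : 0 < a := by positivity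
  have hb : 0 < b := by positivity
  -- dominating function
  set F : ℝ → ℝ := Set.indicator (Set.Ioi 0) (fun t => Real.exp (-a * t)) with hF_def
  set G : ℝ → ℝ :=
    Set.indicator (Set.Ioi 0) (fun x => x ^ (-(1 : ℝ) / 2) * Real.exp (-b * x)) with hG_def
  have hFint : Integrable F := by
    rw [hF_def, integrable_indicator_iff measurableSet_Ioi]
    exact exp_neg_integrableOn_Ioi 0 ha
  have hGint : Integrable G := by
    rw [hG_def, integrable_indicator_iff measurableSet_Ioi]
    have := integrableOn_rpow_mul_exp_neg_mul_rpow (p := 1) (s := -(1 : ℝ) / 2) (b := b)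
      (by norm_num) zero_lt_one hb
    simpa [Real.rpow_one] using this
  have hF1 : Integrable (fun x : Fin m → ℝ => ∏ j, F (x j)) :=
    Integrable.fintype_prod (f := fun _ : Fin m => F) fun _ => hFint
  have hg : Integrable (fun q : (Fin m → ℝ) × ℝ => (∏ j, F (q.1 j)) * G q.2) := by
    rw [MeasureTheory.Measure.volume_eq_prod]
    exact hF1.mul_prod hGint
  have hs : MeasurableSet ((Set.univ.pi fun _ : Fin m => Set.Ioi (0 : ℝ)) ×ˢ Set.Ioi (0 : ℝ)) :=
    (MeasurableSet.univ_pi fun _ => measurableSet_Ioi).prod measurableSet_Ioi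
  refine Integrable.mono' hg.integrableOn ?_ ?_
  · -- a.e. strong measurability
    apply AEStronglyMeasurable.restrict
    apply Measurable.aestronglyMeasurable
    have h1 : ∀ j : Fin m, Measurable fun q : (Fin m → ℝ) × ℝ => q.1 j :=
      fun j => (measurable_pi_apply j).comp measurable_fst
    refine ((Finset.measurable_prod _ fun j _ => ((h1 j).pow_const _).mul
        (((h1 j).inv.add measurable_snd.inv).pow_const _)).mul
        (measurable_snd.pow_const _)).mul ?_
    exact (((Finset.measurable_sum Finset.univ fun j _ => h1 j).const_mul _).sub
        (measurable_snd.const_mul _)).exp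
  · rw [ae_restrict_iff' hs]
    refine Filter.Eventually.of_forall fun q hq => ?_
    obtain ⟨hq1, hq2⟩ := hq
    simp only [Set.mem_pi, Set.mem_univ, Set.mem_Ioi, forall_true_left] at hq1 hq2
    have ht : ∀ j, 0 < q.1 j := hq1
    -- indicators evaluate
    have hFval : ∀ j, F (q.1 j) = Real.exp (-a * q.1 j) := fun j =>
      Set.indicator_of_mem (ht j) _
    have hGval : G q.2 = q.2 ^ (-(1 : ℝ) / 2) * Real.exp (-b * q.2) :=
      Set.indicator_of_mem hq2 _
    -- nonnegativity of h
    have hprod_nonneg : ∀ j : Fin m,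
        0 ≤ (q.1 j) ^ (-(1 : ℝ) / 2) * ((q.1 j)⁻¹ + q.2⁻¹) ^ (-(1 : ℝ) / 2) := fun j =>
      mul_nonneg (Real.rpow_nonneg (ht j).le _)
        (Real.rpow_nonneg (add_nonneg (inv_nonneg.mpr (ht j).le) (inv_nonneg.mpr hq2.le)) _)
    have hpos2 : (0 : ℝ) ≤ q.2 ^ (-(1 : ℝ) / 2) := Real.rpow_nonneg hq2.le _
    have hnonneg :
        0 ≤ (∏ j : Fin m, (q.1 j) ^ (-(1 : ℝ) / 2) *
              ((q.1 j)⁻¹ + q.2⁻¹) ^ (-(1 : ℝ) / 2)) *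
            q.2 ^ (-(1 : ℝ) / 2) *
            Real.exp (-a * (∑ j, q.1 j) - b * q.2) := by
      exact mul_nonneg (mul_nonneg (Finset.prod_nonneg fun j _ => hprod_nonneg j) hpos2)
        (Real.exp_nonneg _)
    rw [Real.norm_eq_abs, abs_of_nonneg hnonneg]
    -- each factor in the product is ≤ 1
    have hle1 : ∀ j : Fin m,
        (q.1 j) ^ (-(1 : ℝ) / 2) * ((q.1 j)⁻¹ + q.2⁻¹) ^ (-(1 : ℝ) / 2) ≤ 1 := by
      intro j
      have h1 : ((q.1 j)⁻¹ + q.2⁻¹) ^ (-(1 : ℝ) / 2) ≤ ((q.1 j)⁻¹) ^ (-(1 : ℝ) / 2) :=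
        Real.rpow_le_rpow_of_nonpos (inv_pos.mpr (ht j))
          (le_add_of_nonneg_right (inv_nonneg.mpr hq2.le)) (by norm_num)
      have h2 : ((q.1 j)⁻¹) ^ (-(1 : ℝ) / 2) = ((q.1 j) ^ (-(1 : ℝ) / 2))⁻¹ :=
        Real.inv_rpow (ht j).le _
      have h3 : (0 : ℝ) < (q.1 j) ^ (-(1 : ℝ) / 2) := Real.rpow_pos_of_pos (ht j) _
      calc (q.1 j) ^ (-(1 : ℝ) / 2) * ((q.1 j)⁻¹ + q.2⁻¹) ^ (-(1 : ℝ) / 2)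
          ≤ (q.1 j) ^ (-(1 : ℝ) / 2) * ((q.1 j) ^ (-(1 : ℝ) / 2))⁻¹ := by
            rw [← h2]; exact mul_le_mul_of_nonneg_left h1 h3.le
        _ = 1 := mul_inv_cancel₀ h3.ne'
    -- split the exponential
    have hexp : Real.exp (-a * (∑ j, q.1 j) - b * q.2) =
        (∏ j, Real.exp (-a * q.1 j)) * Real.exp (-b * q.2) := by
      have h0 : -a * (∑ j, q.1 j) - b * q.2 = (∑ j, -a * q.1 j) + -b * q.2 := by
        rw [← Finset.mul_sum]; ring
      rw [h0, Real.exp_add, Real.exp_sum]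
    calc (∏ j : Fin m, (q.1 j) ^ (-(1 : ℝ) / 2) *
              ((q.1 j)⁻¹ + q.2⁻¹) ^ (-(1 : ℝ) / 2)) *
            q.2 ^ (-(1 : ℝ) / 2) *
            Real.exp (-a * (∑ j, q.1 j) - b * q.2)
        ≤ 1 * (q.2 ^ (-(1 : ℝ) / 2) * Real.exp (-a * (∑ j, q.1 j) - b * q.2)) := by
          rw [mul_assoc]
          exact mul_le_mul_of_nonneg_right
            (Finset.prod_le_one (fun j _ => hprod_nonneg j) (fun j _ => hle1 j))
            (mul_nonneg hpos2 (Real.exp_nonneg _))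
      _ = (∏ j, F (q.1 j)) * G q.2 := by
          rw [one_mul, hexp, hGval]
          simp_rw [hFval]
          ring
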